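/- Let k be a field and let A, B be commutative k-algebras. With I_A = ker(μ_A : A ⊗_k A → A), I_B = ker(μ_B : B ⊗_k B → B), and I the multiplication kernel of A ⊗_k B regarded as an ideal of R = (A ⊗_k A) ⊗_k (B ⊗_k B) via the middle-swap isomorphism, there is a short exact sequence of R-modules 0 → I_A ⊗_k I_B → (I_A ⊗_k (B ⊗_k B)) ⊕ ((A ⊗_k A) ⊗_k I_B) → I → 0, where the first map is the antidiagonal ξ ↦ (ξ, −ξ) (via the natural inclusions into the two summands) and the second map is the sum of the two maps induced by the inclusions I_A ⊆ A ⊗ A and I_B ⊆ B ⊗ B into R, followed by inclusion into I. -/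

import Mathlib

set_option synthInstance.maxHeartbeats 1000000
set_option maxHeartbeats 1000000

open TensorProduct

/-- Generic form of the short exact sequence statement, for arbitrary modules over a field. -/
theorem aux_tensor_ses (k : Type*) [Field k]
    {MA NA PA MB NB PB : Type*}
    [AddCommGroup MA] [AddCommGroup NA] [AddCommGroup PA]
    [AddCommGroup MB] [AddCommGroup NB] [AddCommGroup PB]
    [Module k MA] [Module k NA] [Module k PA]
    [Module k MB] [Module k NB] [Module k PB]
    (iA : MA →ₗ[k] NA) (qA : NA →ₗ[k] PA)
    (iB : MB →ₗ[k] NB) (qB : NB →ₗ[k] PB)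
    (hiA : Function.Injective iA) (hexA : Function.Exact iA qA)
    (hqA : Function.Surjective qA)
    (hiB : Function.Injective iB) (hexB : Function.Exact iB qB)
    (hqB : Function.Surjective qB) :
    Function.Injective (TensorProduct.map (LinearMap.id : MA →ₗ[k] MA) iB) ∧
    (∀ (x : MA ⊗[k] NB) (y : NA ⊗[k] MB),
      TensorProduct.map iA LinearMap.id x + TensorProduct.map LinearMap.id iB y = 0 ↔
      ∃ z : MA ⊗[k] MB, TensorProduct.map LinearMap.id iB z = x ∧
        - TensorProduct.map iA LinearMap.id z = y) ∧
    (∀ w : NA ⊗[k] NB, TensorProduct.map qA qB w = 0 ↔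
      ∃ p : (MA ⊗[k] NB) × (NA ⊗[k] MB),
        TensorProduct.map iA LinearMap.id p.1 + TensorProduct.map LinearMap.id iB p.2 = w) := by
  have h1 : Function.Injective (LinearMap.lTensor MA iB) :=
    Module.Flat.lTensor_preserves_injective_linearMap (M := MA) iB hiB
  have h2 : Function.Injective (LinearMap.lTensor NA iB) :=
    Module.Flat.lTensor_preserves_injective_linearMap (M := NA) iB hiB
  have h3 : Function.Injective (LinearMap.rTensor PB iA) :=
    Module.Flat.rTensor_preserves_injective_linearMap (M := PB) iA hiA
  have hcompB : qB.comp iB = 0 := by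
    ext w
    exact hexB.apply_apply_eq_zero w
  have dA : (TensorProduct.map iA (LinearMap.id : NB →ₗ[k] NB)).comp
      (TensorProduct.map (LinearMap.id : MA →ₗ[k] MA) iB) = TensorProduct.map iA iB := by
    rw [← TensorProduct.map_comp]; simp
  have dB : (TensorProduct.map (LinearMap.id : NA →ₗ[k] NA) iB).comp
      (TensorProduct.map iA (LinearMap.id : MB →ₗ[k] MB)) = TensorProduct.map iA iB := by
    rw [← TensorProduct.map_comp]; simp
  refine ⟨h1, ?_, ?_⟩
  · intro x y
    constructor
    · intro hp
      have hxy : TensorProduct.map iA LinearMap.id x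
          = - TensorProduct.map LinearMap.id iB y := eq_neg_of_add_eq_zero_left hp
      have hx0 : LinearMap.lTensor MA qB x = 0 := by
        apply h3
        rw [map_zero]
        have e1 : LinearMap.rTensor PB iA (LinearMap.lTensor MA qB x)
            = TensorProduct.map iA qB x := by
          rw [← LinearMap.comp_apply, LinearMap.rTensor_comp_lTensor]
        have e2 : TensorProduct.map iA qB x
            = TensorProduct.map LinearMap.id qB (TensorProduct.map iA LinearMap.id x) := by
          rw [← LinearMap.comp_apply, ← TensorProduct.map_comp, LinearMap.id_comp,
            LinearMap.comp_id]
        have e3 : (LinearMap.lTensor NA qB).comp (LinearMap.lTensor NA iB) = 0 := by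
          rw [← LinearMap.lTensor_comp, hcompB, LinearMap.lTensor_zero]
        have e4 : TensorProduct.map LinearMap.id qB (TensorProduct.map LinearMap.id iB y)
            = 0 := DFunLike.congr_fun e3 y
        rw [e1, e2, hxy, map_neg, e4, neg_zero]
      obtain ⟨z, hz⟩ := (Module.Flat.lTensor_exact MA hexB x).mp hx0
      have hz' : TensorProduct.map LinearMap.id iB z = x := hz
      have u1 : TensorProduct.map iA LinearMap.id (TensorProduct.map LinearMap.id iB z)
          = TensorProduct.map iA iB z := DFunLike.congr_fun dA z
      have u2 : TensorProduct.map LinearMap.id iB (TensorProduct.map iA LinearMap.id z)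
          = TensorProduct.map iA iB z := DFunLike.congr_fun dB z
      have t1 : TensorProduct.map LinearMap.id iB (TensorProduct.map iA LinearMap.id z)
          = TensorProduct.map LinearMap.id iB (-y) := by
        rw [u2, ← u1, hz', hxy]
        exact (map_neg (TensorProduct.map LinearMap.id iB) y).symm
      have t2 : TensorProduct.map iA LinearMap.id z = -y := h2 t1
      have t3 : - TensorProduct.map iA LinearMap.id z = y := by rw [t2, neg_neg]
      exact ⟨z, hz', t3⟩
    · rintro ⟨z, hzx, hzy⟩
      have u1 : TensorProduct.map iA LinearMap.id (TensorProduct.map LinearMap.id iB z)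
          = TensorProduct.map iA iB z := DFunLike.congr_fun dA z
      have u2 : TensorProduct.map LinearMap.id iB (TensorProduct.map iA LinearMap.id z)
          = TensorProduct.map iA iB z := DFunLike.congr_fun dB z
      rw [← hzx, ← hzy, map_neg, u1, u2, add_neg_cancel]
  · intro w
    constructor
    · intro h0
      have hk : LinearMap.ker (TensorProduct.map qA qB) =
          LinearMap.range (LinearMap.lTensor NA iB) ⊔ LinearMap.range (LinearMap.rTensor NB iA) :=
        TensorProduct.map_ker hexA hqA hexB hqB
      have hw : w ∈ LinearMap.range (LinearMap.lTensor NA iB)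
          ⊔ LinearMap.range (LinearMap.rTensor NB iA) := by
        rw [← hk]
        exact LinearMap.mem_ker.mpr h0
      obtain ⟨a, ha, b, hb, hab⟩ := Submodule.mem_sup.mp hw
      obtain ⟨a', rfl⟩ := ha
      obtain ⟨b', rfl⟩ := hb
      refine ⟨(b', a'), ?_⟩
      have e5 : TensorProduct.map iA LinearMap.id b' = LinearMap.rTensor NB iA b' := rfl
      have e6 : TensorProduct.map LinearMap.id iB a' = LinearMap.lTensor NA iB a' := rfl
      rw [e5, e6, add_comm]
      exact hab
    · rintro ⟨p, rfl⟩
      have z1 : ∀ t : MA ⊗[k] NB,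
          TensorProduct.map qA qB (TensorProduct.map iA LinearMap.id t) = 0 := by
        intro t
        induction t using TensorProduct.induction_on with
        | zero => simp
        | add a b ha hb => simp only [map_add, ha, hb, add_zero]
        | tmul m n =>
          rw [TensorProduct.map_tmul, TensorProduct.map_tmul, LinearMap.id_coe, id_eq,
            hexA.apply_apply_eq_zero m, TensorProduct.zero_tmul]
      have z2 : ∀ t : NA ⊗[k] MB,
          TensorProduct.map qA qB (TensorProduct.map LinearMap.id iB t) = 0 := by
        intro t
        induction t using TensorProduct.induction_on with
        | zero => simp
        | add a b ha hb => simp only [map_add, ha, hb, add_zero]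
        | tmul m n =>
          rw [TensorProduct.map_tmul, TensorProduct.map_tmul, LinearMap.id_coe, id_eq,
            hexB.apply_apply_eq_zero n, TensorProduct.tmul_zero]
      rw [map_add, z1, z2, add_zero]

variable (k : Type*) [Field k]
variable (A : Type*) [CommRing A] [Algebra k A]
variable (B : Type*) [CommRing B] [Algebra k B]

/-- Let `k` be a field and `A`, `B` commutative `k`-algebras.  With
`I_A = ker μ_A`, `I_B = ker μ_B`, and `I` the multiplication kernel of `A ⊗ B` regarded as an
ideal of `R = (A ⊗ A) ⊗ (B ⊗ B)` via the middle-swap isomorphism, there is a short exact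
sequence of `R`-modules
`0 → I_A ⊗ I_B → (I_A ⊗ (B ⊗ B)) ⊕ ((A ⊗ A) ⊗ I_B) → I → 0`,
where the first map is the antidiagonal `ξ ↦ (ξ, −ξ)` (via the natural inclusions) and the
second is the sum of the maps induced by the inclusions `I_A ⊆ A ⊗ A` and `I_B ⊆ B ⊗ B`. -/
theorem diagonal_ideal_ses'
    (IA : Ideal (A ⊗[k] A)) (hIA : IA = RingHom.ker (Algebra.TensorProduct.lmul' k (S := A)))
    (IB : Ideal (B ⊗[k] B)) (hIB : IB = RingHom.ker (Algebra.TensorProduct.lmul' k (S := B)))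
    (I : Ideal ((A ⊗[k] A) ⊗[k] (B ⊗[k] B)))
    (hI : I = Ideal.map (Algebra.TensorProduct.tensorTensorTensorComm k k k k A B A B)
      (RingHom.ker (Algebra.TensorProduct.lmul' k (S := A ⊗[k] B))))
    (δ : (↥IA ⊗[k] ↥IB) →ₗ[k] (↥IA ⊗[k] (B ⊗[k] B)) × ((A ⊗[k] A) ⊗[k] ↥IB))
    (hδ : ∀ z : ↥IA ⊗[k] ↥IB, δ z =
      (TensorProduct.map LinearMap.id ((Submodule.subtype IB).restrictScalars k) z,
       - TensorProduct.map ((Submodule.subtype IA).restrictScalars k) LinearMap.id z))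
    (σ : ((↥IA ⊗[k] (B ⊗[k] B)) × ((A ⊗[k] A) ⊗[k] ↥IB)) →ₗ[k]
      (A ⊗[k] A) ⊗[k] (B ⊗[k] B))
    (hσ : σ = LinearMap.coprod
      (TensorProduct.map ((Submodule.subtype IA).restrictScalars k) LinearMap.id)
      (TensorProduct.map LinearMap.id ((Submodule.subtype IB).restrictScalars k))) :
    Function.Injective δ ∧
    (∀ p : (↥IA ⊗[k] (B ⊗[k] B)) × ((A ⊗[k] A) ⊗[k] ↥IB),
      σ p = 0 ↔ p ∈ LinearMap.range δ) ∧
    (∀ x : (A ⊗[k] A) ⊗[k] (B ⊗[k] B), x ∈ I ↔ x ∈ LinearMap.range σ) := by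
  have hexA : Function.Exact ((Submodule.subtype IA).restrictScalars k)
      (Algebra.TensorProduct.lmul' k (S := A)).toLinearMap := by
    rw [LinearMap.exact_iff]
    ext y
    simp [hIA, RingHom.mem_ker]
  have hexB : Function.Exact ((Submodule.subtype IB).restrictScalars k)
      (Algebra.TensorProduct.lmul' k (S := B)).toLinearMap := by
    rw [LinearMap.exact_iff]
    ext y
    simp [hIB, RingHom.mem_ker]
  have hqAs : Function.Surjective (Algebra.TensorProduct.lmul' k (S := A)).toLinearMap :=
    fun a => ⟨a ⊗ₜ 1, by simp⟩
  have hqBs : Function.Surjective (Algebra.TensorProduct.lmul' k (S := B)).toLinearMap :=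
    fun b => ⟨b ⊗ₜ 1, by simp⟩
  obtain ⟨aux1, aux2, aux3⟩ := aux_tensor_ses k
    ((Submodule.subtype IA).restrictScalars k) (Algebra.TensorProduct.lmul' k (S := A)).toLinearMap
    ((Submodule.subtype IB).restrictScalars k) (Algebra.TensorProduct.lmul' k (S := B)).toLinearMap
    Subtype.val_injective hexA hqAs Subtype.val_injective hexB hqBs
  refine ⟨?_, ?_, ?_⟩
  · -- injectivity of δ
    intro u v huv
    have h := congrArg Prod.fst huv
    simp only [hδ] at h
    exact aux1 h
  · -- exactness in the middle
    rintro ⟨x, y⟩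
    rw [hσ]
    simp only [LinearMap.coprod_apply]
    rw [aux2 x y]
    constructor
    · rintro ⟨z, hzx, hzy⟩
      refine ⟨z, ?_⟩
      rw [hδ z]
      exact Prod.ext hzx hzy
    · rintro ⟨z, hz⟩
      rw [hδ z] at hz
      exact ⟨z, congrArg Prod.fst hz, congrArg Prod.snd hz⟩
  · -- exactness at the right end
    have keymu : ∀ w : (A ⊗[k] B) ⊗[k] (A ⊗[k] B),
        (Algebra.TensorProduct.lmul' k (S := A ⊗[k] B)) w =
        TensorProduct.map (Algebra.TensorProduct.lmul' k (S := A)).toLinearMap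
          (Algebra.TensorProduct.lmul' k (S := B)).toLinearMap
          (Algebra.TensorProduct.tensorTensorTensorComm k k k k A B A B w) := by
      intro w
      induction w using TensorProduct.induction_on with
      | zero => simp
      | add u v hu hv => simp only [map_add, hu, hv]
      | tmul u v =>
        induction u using TensorProduct.induction_on with
        | zero => simp
        | add u1 u2 g1 g2 => simp only [add_tmul, map_add, g1, g2]
        | tmul a b =>
          induction v using TensorProduct.induction_on with
          | zero => simp
          | add v1 v2 g1 g2 => simp only [tmul_add, map_add, g1, g2]
          | tmul a' b' =>
            simp [Algebra.TensorProduct.tensorTensorTensorComm_tmul,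
              Algebra.TensorProduct.lmul'_apply_tmul, Algebra.TensorProduct.tmul_mul_tmul]
    intro x
    have hmem : x ∈ I ↔ TensorProduct.map
        (Algebra.TensorProduct.lmul' k (S := A)).toLinearMap
        (Algebra.TensorProduct.lmul' k (S := B)).toLinearMap x = 0 := by
      rw [hI, Ideal.mem_map_of_equiv]
      constructor
      · rintro ⟨w, hw, rfl⟩
        rw [← keymu w]
        exact hw
      · intro h0
        refine ⟨(Algebra.TensorProduct.tensorTensorTensorComm k k k k A B A B).symm x, ?_,
          AlgEquiv.apply_symm_apply _ x⟩
        have h1 : (Algebra.TensorProduct.lmul' k (S := A ⊗[k] B))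
            ((Algebra.TensorProduct.tensorTensorTensorComm k k k k A B A B).symm x) = 0 := by
          rw [keymu, AlgEquiv.apply_symm_apply]
          exact h0
        exact h1
    rw [hmem, aux3 x, hσ]
    constructor
    · rintro ⟨p, hp⟩
      exact ⟨p, by simpa only [LinearMap.coprod_apply] using hp⟩
    · rintro ⟨p, hp⟩
      exact ⟨p, by simpa only [LinearMap.coprod_apply] using hp⟩
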